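/- arXiv:2301.07730 — 2 statements merged into one kernel-verified Lean document; each statement's English description precedes it below -/
import Mathlib

section
/- Let d_A, d_B ≥ 1, κ ∈ (0,1), and α ≥ 1. Let |ψ⟩, |φ⟩ ∈ ℂ^{d_A}⊗ℂ^{d_B} be unit vectors, with reduced density matrices ρ = Tr_B(|ψ⟩⟨ψ|) and σ = Tr_B(|φ⟩⟨φ|). Let P be an odd real polynomial such that |P(x)| ≤ 2 for every x ∈ [−1,1] and |P(x) − sgn(x)| ≤ κ for every x ∈ [−1,1] with |x| ≥ κ. Let K = Tr_A(|ψ⟩⟨φ|) ∈ M_{d_B}(ℂ), fix a singular value decomposition K = U·Σ·V†, and set W̃ = U·P(Σ/α)·V†, where P is applied entrywise to the diagonal of Σ/α. Then |⟨ψ|(I_{d_A}⊗W̃)|φ⟩ − F(ρ,σ)| ≤ 4·d_A·α·κ. -/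
open scoped Matrix Kronecker ComplexOrder

/-- The operator (spectral) norm of a square complex matrix. -/
noncomputable def opNorm {n : Type*} [Fintype n] [DecidableEq n] (A : Matrix n n ℂ) : ℝ :=
  ‖Matrix.toEuclideanCLM (𝕜 := ℂ) A‖

/-- The positive semidefinite square root of a positive semidefinite matrix
(the Mathlib definition of December 2024, since removed from Mathlib). -/
noncomputable def Matrix.PosSemidef.sqrt {n : Type*} [Fintype n] [DecidableEq n] {𝕜 : Type*}
    [RCLike 𝕜] {A : Matrix n n 𝕜} (hA : A.PosSemidef) : Matrix n n 𝕜 :=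
  hA.1.eigenvectorUnitary.1 * Matrix.diagonal ((↑) ∘ (√·) ∘ hA.1.eigenvalues) *
    (star hA.1.eigenvectorUnitary : Matrix n n 𝕜)

section sqrtPort
open scoped MatrixOrder

lemma Matrix.PosSemidef.sqrt_eq_cfc_sqrt {n : Type*} [Fintype n] [DecidableEq n]
    {A : Matrix n n ℂ} (hA : A.PosSemidef) : hA.sqrt = CFC.sqrt A := by
  rw [CFC.sqrt_eq_cfc, cfc_nnreal_eq_real _ A, hA.1.cfc_eq]
  simp only [Matrix.IsHermitian.cfc, Unitary.conjStarAlgAut_apply, Matrix.PosSemidef.sqrt]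
  congr 2
  congr 1
  funext i
  simp [max_eq_left (hA.eigenvalues_nonneg i)]

lemma Matrix.PosSemidef.posSemidef_sqrt {n : Type*} [Fintype n] [DecidableEq n]
    {A : Matrix n n ℂ} (hA : A.PosSemidef) : hA.sqrt.PosSemidef := by
  rw [hA.sqrt_eq_cfc_sqrt]
  exact Matrix.nonneg_iff_posSemidef.mp (CFC.sqrt_nonneg A)

lemma Matrix.PosSemidef.sqrt_mul_self {n : Type*} [Fintype n] [DecidableEq n]
    {A : Matrix n n ℂ} (hA : A.PosSemidef) : hA.sqrt * hA.sqrt = A := by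
  rw [hA.sqrt_eq_cfc_sqrt]
  exact CFC.sqrt_mul_sqrt_self A hA.nonneg

lemma Matrix.PosSemidef.eq_sqrt_of_sq_eq {n : Type*} [Fintype n] [DecidableEq n]
    {B A : Matrix n n ℂ} (hB : B.PosSemidef) (hA : A.PosSemidef) (h : B ^ 2 = A) :
    B = hA.sqrt := by
  rw [hA.sqrt_eq_cfc_sqrt]
  subst h
  exact (CFC.sqrt_sq B hB.nonneg).symm

end sqrtPort

/-- The trace norm `‖A‖₁ = Tr √(Aᴴ A)` of a square complex matrix. -/
noncomputable def traceNorm {n : Type*} [Fintype n] [DecidableEq n] (A : Matrix n n ℂ) : ℝ :=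
  ((Matrix.posSemidef_conjTranspose_mul_self A).sqrt.trace).re

/-- The (square-root) fidelity `F(ρ,σ) = ‖√ρ √σ‖₁` of positive semidefinite matrices. -/
noncomputable def fidelity {n : Type*} [Fintype n] [DecidableEq n] {ρ σ : Matrix n n ℂ}
    (hρ : ρ.PosSemidef) (hσ : σ.PosSemidef) : ℝ :=
  traceNorm (hρ.sqrt * hσ.sqrt)

/-- Functional calculus for a Hermitian matrix: `f(A) = Σ_i f(λ_i) |v_i⟩⟨v_i|`. -/
noncomputable def matFun {n : Type*} [Fintype n] [DecidableEq n] {A : Matrix n n ℂ}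
    (hA : A.IsHermitian) (f : ℝ → ℝ) : Matrix n n ℂ :=
  (hA.eigenvectorUnitary : Matrix n n ℂ) *
    Matrix.diagonal (fun i => (f (hA.eigenvalues i) : ℂ)) *
    (star (hA.eigenvectorUnitary : Matrix n n ℂ))

/-- Partial trace over the first tensor factor. -/
noncomputable def ptraceA {a b : Type*} [Fintype a] (X : Matrix (a × b) (a × b) ℂ) :
    Matrix b b ℂ :=
  Matrix.of fun i j => ∑ k, X (k, i) (k, j)

/-- Partial trace over the second tensor factor. -/
noncomputable def ptraceB {a b : Type*} [Fintype b] (X : Matrix (a × b) (a × b) ℂ) :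
    Matrix a a ℂ :=
  Matrix.of fun i j => ∑ k, X (i, k) (j, k)

/-- The outer product `|ψ⟩⟨φ|`. -/
def outer {a : Type*} (ψ φ : a → ℂ) : Matrix a a ℂ :=
  Matrix.of fun i j => ψ i * (starRingEnd ℂ) (φ j)

/-- The Euclidean norm of a finitely supported complex vector. -/
noncomputable def evnorm {a : Type*} [Fintype a] (v : a → ℂ) : ℝ :=
  Real.sqrt (∑ i, ‖v i‖ ^ 2)

/-- Trace of the PSD square root of a unitarily diagonalized PSD matrix. -/
private lemma trace_sqrt_diag {n : Type*} [Fintype n] [DecidableEq n]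
    {W : Matrix n n ℂ} (hW : W ∈ Matrix.unitaryGroup n ℂ)
    (d : n → ℝ) (hd : ∀ i, 0 ≤ d i) {X : Matrix n n ℂ} (hX : X.PosSemidef)
    (hXd : X = W * Matrix.diagonal (fun i => (d i : ℂ)) * Wᴴ) :
    hX.sqrt.trace = ((∑ i, Real.sqrt (d i) : ℝ) : ℂ) := by
  have hWW : Wᴴ * W = 1 := by simpa [Matrix.star_eq_conjTranspose] using hW.1
  set S := W * Matrix.diagonal (fun i => ((Real.sqrt (d i) : ℝ) : ℂ)) * Wᴴ with hS
  have hSpsd : S.PosSemidef := by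
    refine Matrix.PosSemidef.mul_mul_conjTranspose_same ?_ W
    refine Matrix.posSemidef_diagonal_iff.mpr fun i => ?_
    exact_mod_cast Complex.zero_le_real.mpr (Real.sqrt_nonneg _)
  have hsq : S ^ 2 = X := by
    have hdd : (Matrix.diagonal fun i => ((Real.sqrt (d i) : ℝ) : ℂ)) *
        (Matrix.diagonal fun i => ((Real.sqrt (d i) : ℝ) : ℂ)) =
        Matrix.diagonal fun i => ((d i : ℝ) : ℂ) := by
      rw [Matrix.diagonal_mul_diagonal]
      refine congrArg Matrix.diagonal (funext fun i => ?_)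
      rw [← Complex.ofReal_mul, Real.mul_self_sqrt (hd i)]
    rw [pow_two, hS, hXd]
    rw [Matrix.mul_assoc (W * _) Wᴴ, ← Matrix.mul_assoc Wᴴ (W * _) Wᴴ,
      ← Matrix.mul_assoc Wᴴ W, hWW, Matrix.one_mul,
      Matrix.mul_assoc W _ _, ← Matrix.mul_assoc _ _ Wᴴ, hdd, ← Matrix.mul_assoc]
  have hsqrt : S = hX.sqrt := hSpsd.eq_sqrt_of_sq_eq hX hsq
  rw [← hsqrt, hS, Matrix.trace_mul_comm (W * _) Wᴴ, ← Matrix.mul_assoc, hWW,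
    Matrix.one_mul, Matrix.trace_diagonal]
  push_cast
  rfl

/-- If `Mᴴ M` is diagonal with entries `d`, then `Tr √(M Mᴴ) = ∑ √(d j)`. -/
private lemma trace_sqrt_gram {m n : Type*} [Fintype m] [DecidableEq m] [Fintype n]
    [DecidableEq n] (M : Matrix m n ℂ) (d : n → ℝ) (hd : ∀ j, 0 ≤ d j)
    (hMM : Mᴴ * M = Matrix.diagonal (fun j => (d j : ℂ)))
    {G : Matrix m m ℂ} (hG : G.PosSemidef) (hGdef : G = M * Mᴴ) :
    hG.sqrt.trace = ((∑ j, Real.sqrt (d j) : ℝ) : ℂ) := by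
  have hdiagMM : ∀ j, (d j : ℂ) = ∑ i, (starRingEnd ℂ) (M i j) * M i j := by
    intro j
    have := congrFun (congrFun hMM j) j
    simp only [Matrix.mul_apply, Matrix.conjTranspose_apply, Matrix.diagonal_apply_eq] at this
    simpa using this.symm
  have hcol : ∀ j, d j = 0 → ∀ i, M i j = 0 := by
    intro j hj i
    have h1 : (0 : ℝ) = ∑ i, Complex.normSq (M i j) := by
      have := hdiagMM j
      rw [hj] at this
      have : ((0:ℝ):ℂ) = ((∑ i, Complex.normSq (M i j) : ℝ) : ℂ) := by
        push_cast
        simpa [Complex.normSq_eq_conj_mul_self] using this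
      exact_mod_cast this
    have h2 : Complex.normSq (M i j) = 0 := by
      have := (Finset.sum_eq_zero_iff_of_nonneg (fun i _ => Complex.normSq_nonneg (M i j))).mp
        h1.symm i (Finset.mem_univ i)
      exact this
    exact Complex.normSq_eq_zero.mp h2
  set g : n → ℝ := fun j => (Real.sqrt (d j))⁻¹ with hg
  set S := M * Matrix.diagonal (fun j => ((g j : ℝ) : ℂ)) * Mᴴ with hS
  have hSpsd : S.PosSemidef := by
    refine Matrix.PosSemidef.mul_mul_conjTranspose_same ?_ M
    refine Matrix.posSemidef_diagonal_iff.mpr fun j => ?_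
    exact_mod_cast Complex.zero_le_real.mpr (inv_nonneg.mpr (Real.sqrt_nonneg _))
  have hsq : S ^ 2 = G := by
    rw [pow_two, hS, hGdef]
    rw [Matrix.mul_assoc (M * _) Mᴴ, ← Matrix.mul_assoc Mᴴ (M * _) Mᴴ,
      ← Matrix.mul_assoc Mᴴ M, hMM]
    rw [Matrix.mul_assoc M _ _, ← Matrix.mul_assoc (Matrix.diagonal _) _ _,
      Matrix.diagonal_mul_diagonal, Matrix.diagonal_mul_diagonal, ← Matrix.mul_assoc]
    -- now : M * diagonal (g * (d * g)) * Mᴴ = M * Mᴴ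
    ext i k
    simp only [Matrix.mul_apply, Matrix.mul_diagonal, Matrix.conjTranspose_apply,
      Matrix.diagonal_apply, mul_ite, mul_zero, Finset.sum_ite_eq', Finset.mem_univ, if_true]
    refine Finset.sum_congr rfl fun j _ => ?_
    by_cases hj : d j = 0
    · simp [hcol j hj]
    · have hsj : Real.sqrt (d j) ≠ 0 := by
        simpa [Real.sqrt_eq_zero'] using lt_of_le_of_ne (hd j) (Ne.symm hj) |>.not_ge
      have : (g j : ℂ) * ((d j : ℂ) * (g j : ℂ)) = 1 := by
        have h2 : g j * (d j * g j) = 1 := by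
          show (Real.sqrt (d j))⁻¹ * (d j * (Real.sqrt (d j))⁻¹) = 1
          field_simp
          linarith [Real.mul_self_sqrt (hd j), Real.sq_sqrt (hd j)]
        calc (g j : ℂ) * ((d j : ℂ) * (g j : ℂ))
            = ((g j * (d j * g j) : ℝ) : ℂ) := by push_cast; ring
        _ = 1 := by rw [h2]; norm_num
      rw [this, mul_one]
  have hsqrt : S = hG.sqrt := hSpsd.eq_sqrt_of_sq_eq hG hsq
  rw [← hsqrt, hS, Matrix.trace_mul_comm (M * _) Mᴴ, ← Matrix.mul_assoc, hMM,
    Matrix.diagonal_mul_diagonal, Matrix.trace_diagonal]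
  push_cast
  refine Finset.sum_congr rfl fun j _ => ?_
  rw [← Complex.ofReal_mul]
  congr 1
  rcases eq_or_lt_of_le (hd j) with h | h
  · simp [← h]
  · have hsj : Real.sqrt (d j) ≠ 0 := ne_of_gt (Real.sqrt_pos.mpr h)
    rw [hg]
    nth_rewrite 1 [← Real.mul_self_sqrt (hd j)]
    rw [mul_inv_cancel_right₀ hsj]

/-- `Tr √(M Mᴴ) = Tr √(Mᴴ M)`. -/
private lemma trace_sqrt_swap {m n : Type*} [Fintype m] [DecidableEq m] [Fintype n]
    [DecidableEq n] (M : Matrix m n ℂ) {G : Matrix m m ℂ} {H : Matrix n n ℂ}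
    (hG : G.PosSemidef) (hH : H.PosSemidef)
    (hGdef : G = M * Mᴴ) (hHdef : H = Mᴴ * M) :
    hG.sqrt.trace = hH.sqrt.trace := by
  have hherm : H.IsHermitian := hH.1
  set W : Matrix n n ℂ := (hherm.eigenvectorUnitary : Matrix n n ℂ) with hWdef
  have hWmem : W ∈ Matrix.unitaryGroup n ℂ := hherm.eigenvectorUnitary.2
  have hWW : Wᴴ * W = 1 := by simpa [Matrix.star_eq_conjTranspose] using hWmem.1
  have hWW' : W * Wᴴ = 1 := by simpa [Matrix.star_eq_conjTranspose] using hWmem.2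
  set lam : n → ℝ := hherm.eigenvalues with hlam
  have hlam0 : ∀ i, 0 ≤ lam i := fun i => hH.eigenvalues_nonneg i
  have hspec : H = W * Matrix.diagonal (fun i => (lam i : ℂ)) * Wᴴ := by
    have := hherm.spectral_theorem
    simpa [Matrix.star_eq_conjTranspose, Function.comp_def] using this
  have hdiag : Wᴴ * H * W = Matrix.diagonal (fun i => (lam i : ℂ)) := by
    have := hherm.conjStarAlgAut_star_eigenvectorUnitary
    simpa [Unitary.conjStarAlgAut_star_apply, Matrix.star_eq_conjTranspose,
      Function.comp_def] using this
  have hRHS : hH.sqrt.trace = ((∑ i, Real.sqrt (lam i) : ℝ) : ℂ) :=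
    trace_sqrt_diag hWmem lam hlam0 hH hspec
  have hMW : (M * W)ᴴ * (M * W) = Matrix.diagonal (fun i => (lam i : ℂ)) := by
    rw [Matrix.conjTranspose_mul, Matrix.mul_assoc, ← Matrix.mul_assoc Mᴴ M W,
      ← hHdef, ← Matrix.mul_assoc, hdiag]
  have hGMW : G = (M * W) * (M * W)ᴴ := by
    rw [Matrix.conjTranspose_mul, Matrix.mul_assoc, ← Matrix.mul_assoc W Wᴴ Mᴴ, hWW',
      Matrix.one_mul, hGdef]
  have hLHS : hG.sqrt.trace = ((∑ i, Real.sqrt (lam i) : ℝ) : ℂ) :=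
    trace_sqrt_gram (M * W) lam hlam0 hMW hG hGMW
  rw [hLHS, hRHS]

private lemma inner_kron_eq_trace {dA dB : ℕ} (ψ φ : Fin dA × Fin dB → ℂ)
    (W : Matrix (Fin dB) (Fin dB) ℂ) :
    dotProduct (star ψ) (((1 : Matrix (Fin dA) (Fin dA) ℂ) ⊗ₖ W) *ᵥ φ)
      = Matrix.trace (W * (ptraceA (outer ψ φ))ᴴ) := by
  rw [Matrix.trace]
  simp only [dotProduct, Matrix.mulVec, Matrix.diag_apply, Matrix.mul_apply,
    Matrix.conjTranspose_apply, ptraceA, outer, Matrix.of_apply, Pi.star_apply,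
    Matrix.kroneckerMap_apply, Matrix.one_apply, Fintype.sum_prod_type, ite_mul, one_mul,
    zero_mul, map_sum, map_mul, RingHomCompTriple.comp_apply, Complex.conj_conj,
    star_sum, star_mul', Finset.sum_ite_irrel, Finset.sum_const_zero, Finset.sum_ite_eq,
    Finset.mem_univ, if_true, Finset.mul_sum]
  rw [Finset.sum_comm]
  refine Finset.sum_congr rfl fun a _ => ?_
  rw [Finset.sum_comm]
  refine Finset.sum_congr rfl fun i _ => ?_
  refine Finset.sum_congr rfl fun j _ => ?_
  simp only [Pi.star_apply, Complex.star_def, Complex.conj_conj]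
  ring

private lemma abs_dot_le {ι : Type*} [Fintype ι] (x y : ι → ℂ) :
    ‖dotProduct (star x) y‖ ≤ evnorm x * evnorm y := by
  have h := norm_inner_le_norm (𝕜 := ℂ) (E := EuclideanSpace ℂ ι)
    ((WithLp.equiv 2 _).symm x) ((WithLp.equiv 2 _).symm y)
  rw [PiLp.inner_apply] at h
  simp only [WithLp.equiv_symm_apply, PiLp.toLp_apply, RCLike.inner_apply] at h
  have hnx : ‖(WithLp.equiv 2 (ι → ℂ)).symm x‖ = evnorm x := by
    rw [EuclideanSpace.norm_eq]; rfl
  have hny : ‖(WithLp.equiv 2 (ι → ℂ)).symm y‖ = evnorm y := by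
    rw [EuclideanSpace.norm_eq]; rfl
  simp only [WithLp.equiv_symm_apply] at hnx hny
  rw [hnx, hny] at h
  have he : star x ⬝ᵥ y = ∑ i, y i * (starRingEnd ℂ) (x i) := by
    simp [dotProduct, mul_comm]
  rw [he]
  exact h

private lemma dot_self_eq {ι : Type*} [Fintype ι] (v : ι → ℂ) :
    dotProduct (star v) v = ((∑ i, ‖v i‖ ^ 2 : ℝ) : ℂ) := by
  push_cast
  rw [dotProduct]
  refine Finset.sum_congr rfl fun i _ => ?_
  rw [Pi.star_apply, Complex.star_def, ← Complex.normSq_eq_conj_mul_self,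
    Complex.normSq_eq_norm_sq]
  norm_cast

private lemma evnorm_mulVec_unitary {ι : Type*} [Fintype ι] [DecidableEq ι]
    (M : Matrix ι ι ℂ) (hM : Mᴴ * M = 1) (v : ι → ℂ) : evnorm (M *ᵥ v) = evnorm v := by
  have key : dotProduct (star (M *ᵥ v)) (M *ᵥ v) = dotProduct (star v) v := by
    rw [Matrix.star_mulVec, Matrix.dotProduct_mulVec, Matrix.vecMul_vecMul, hM,
      Matrix.vecMul_one]
  rw [dot_self_eq, dot_self_eq] at key
  unfold evnorm
  congr 1
  exact_mod_cast key
set_option maxHeartbeats 1000000 in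
/-- Robust explicit Uhlmann transformation: if `P` is an odd polynomial bounded by `2` on
`[−1,1]` that `κ`-approximates the sign function away from `[−κ,κ]`, and
`Wt = U P(Σ/α) V†` where `K = Tr_A |ψ⟩⟨φ| = U Σ V†` is a singular value decomposition, then
`|⟨ψ|(I⊗Wt)|φ⟩ − F(ρ,σ)| ≤ 4·d_A·α·κ`. -/
theorem uhlmann_explicit_robust (dA dB : ℕ) (hdA : 1 ≤ dA) (hdB : 1 ≤ dB)
    (κ α : ℝ) (hκ0 : 0 < κ) (hκ1 : κ < 1) (hα : 1 ≤ α)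
    (ψ φ : Fin dA × Fin dB → ℂ) (hψ : evnorm ψ = 1) (hφ : evnorm φ = 1)
    (ρ σ : Matrix (Fin dA) (Fin dA) ℂ)
    (hρdef : ρ = ptraceB (outer ψ ψ)) (hσdef : σ = ptraceB (outer φ φ))
    (P : Polynomial ℝ)
    (hodd : ∀ x : ℝ, P.eval (-x) = -P.eval x)
    (hbound : ∀ x : ℝ, -1 ≤ x → x ≤ 1 → |P.eval x| ≤ 2)
    (happrox : ∀ x : ℝ, -1 ≤ x → x ≤ 1 → κ ≤ |x| → |P.eval x - Real.sign x| ≤ κ)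
    (K : Matrix (Fin dB) (Fin dB) ℂ) (hKdef : K = ptraceA (outer ψ φ))
    (U V : Matrix (Fin dB) (Fin dB) ℂ)
    (hU : U ∈ Matrix.unitaryGroup (Fin dB) ℂ) (hV : V ∈ Matrix.unitaryGroup (Fin dB) ℂ)
    (s : Fin dB → ℝ) (hs : ∀ i, 0 ≤ s i)
    (hSVD : K = U * Matrix.diagonal (fun i => (s i : ℂ)) * Vᴴ)
    (Wt : Matrix (Fin dB) (Fin dB) ℂ)
    (hW : Wt = U * Matrix.diagonal (fun i => (Complex.ofReal (P.eval (s i / α)))) * Vᴴ) :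
    ∀ (hρ : ρ.PosSemidef) (hσ : σ.PosSemidef),
      ‖star ψ ⬝ᵥ (((1 : Matrix (Fin dA) (Fin dA) ℂ) ⊗ₖ Wt) *ᵥ φ) - (fidelity hρ hσ : ℂ)‖
        ≤ 4 * dA * α * κ := by
  intro hρ hσ
  have hα0 : (0:ℝ) < α := lt_of_lt_of_le one_pos hα
  have hUU : Uᴴ * U = 1 := by simpa [Matrix.star_eq_conjTranspose] using hU.1
  have hUU' : U * Uᴴ = 1 := by simpa [Matrix.star_eq_conjTranspose] using hU.2
  have hVV : Vᴴ * V = 1 := by simpa [Matrix.star_eq_conjTranspose] using hV.1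
  have hVV' : V * Vᴴ = 1 := by simpa [Matrix.star_eq_conjTranspose] using hV.2
  set A : Matrix (Fin dA) (Fin dB) ℂ := Matrix.of (fun a i => ψ (a, i)) with hA
  set B : Matrix (Fin dA) (Fin dB) ℂ := Matrix.of (fun a i => φ (a, i)) with hB
  have hρA : ρ = A * Aᴴ := by
    rw [hρdef]
    ext i j
    simp [ptraceB, outer, Matrix.mul_apply, Matrix.conjTranspose_apply, hA,
      Complex.star_def]
  have hσB : σ = B * Bᴴ := by
    rw [hσdef]
    ext i j
    simp [ptraceB, outer, Matrix.mul_apply, Matrix.conjTranspose_apply, hB,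
      Complex.star_def]
  have hKfact : K = Aᵀ * B.map (starRingEnd ℂ) := by
    rw [hKdef]
    ext i j
    simp [ptraceA, outer, Matrix.mul_apply, Matrix.transpose_apply, Matrix.map_apply, hA, hB]
  have hN : Aᴴ * B = K.map (starRingEnd ℂ) := by
    rw [hKdef]
    ext i j
    simp [ptraceA, outer, Matrix.mul_apply, Matrix.conjTranspose_apply, Matrix.map_apply,
      hA, hB, Complex.star_def, map_sum]
  -- `Kᴴ` in SVD form
  have hKH : Kᴴ = V * Matrix.diagonal (fun i => (s i : ℂ)) * Uᴴ := by
    rw [hSVD]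
    rw [Matrix.conjTranspose_mul, Matrix.conjTranspose_mul, Matrix.conjTranspose_conjTranspose,
      Matrix.diagonal_conjTranspose]
    rw [Matrix.mul_assoc]
    congr 2
    refine congrArg Matrix.diagonal (funext fun i => ?_)
    simp [Complex.star_def, Complex.conj_ofReal]
  -- the dot product equals a trace, for any W
  have htr : ∀ W : Matrix (Fin dB) (Fin dB) ℂ,
      star ψ ⬝ᵥ (((1 : Matrix (Fin dA) (Fin dA) ℂ) ⊗ₖ W) *ᵥ φ) = (W * Kᴴ).trace := by
    intro W
    rw [inner_kron_eq_trace ψ φ W, hKdef]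
  have htr2 : ∀ D : Matrix (Fin dB) (Fin dB) ℂ,
      ((U * D * Vᴴ) * Kᴴ).trace = (D * Matrix.diagonal (fun i => (s i : ℂ))).trace := by
    intro D
    rw [hKH]
    rw [Matrix.mul_assoc (U * D) Vᴴ, ← Matrix.mul_assoc Vᴴ (V * _) Uᴴ,
      ← Matrix.mul_assoc Vᴴ V _, hVV, Matrix.one_mul]
    rw [← Matrix.mul_assoc (U * D) _ Uᴴ, Matrix.trace_mul_comm _ Uᴴ,
      ← Matrix.mul_assoc Uᴴ (U * D) _, ← Matrix.mul_assoc Uᴴ U D, hUU, Matrix.one_mul]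
  -- value of the dot product
  have hval : star ψ ⬝ᵥ (((1 : Matrix (Fin dA) (Fin dA) ℂ) ⊗ₖ Wt) *ᵥ φ)
      = ((∑ i, P.eval (s i / α) * s i : ℝ) : ℂ) := by
    rw [htr Wt, hW, htr2, Matrix.diagonal_mul_diagonal, Matrix.trace_diagonal]
    push_cast
    rfl
  -- the sum of the singular values is at most 1
  have hsum1 : ∑ i, s i ≤ 1 := by
    have h0 : star ψ ⬝ᵥ (((1 : Matrix (Fin dA) (Fin dA) ℂ) ⊗ₖ (U * Vᴴ)) *ᵥ φ)
        = ((∑ i, s i : ℝ) : ℂ) := by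
      have hrw : U * Vᴴ = U * 1 * Vᴴ := by rw [Matrix.mul_one]
      rw [htr (U * Vᴴ), hrw, htr2, Matrix.one_mul, Matrix.trace_diagonal]
      push_cast
      rfl
    have hkron : ((1 : Matrix (Fin dA) (Fin dA) ℂ) ⊗ₖ (U * Vᴴ))ᴴ *
        ((1 : Matrix (Fin dA) (Fin dA) ℂ) ⊗ₖ (U * Vᴴ)) = 1 := by
      have hconj : ((1 : Matrix (Fin dA) (Fin dA) ℂ) ⊗ₖ (U * Vᴴ))ᴴ
          = (1 : Matrix (Fin dA) (Fin dA) ℂ) ⊗ₖ (U * Vᴴ)ᴴ := by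
        ext p q
        obtain ⟨a, i⟩ := p
        obtain ⟨b, j⟩ := q
        simp only [Matrix.conjTranspose_apply, Matrix.kroneckerMap_apply, star_mul',
          Matrix.one_apply]
        by_cases hab : a = b
        · subst hab
          simp
        · have hba : ¬ b = a := fun h => hab h.symm
          simp [hab, hba]
      rw [hconj, ← Matrix.mul_kronecker_mul, Matrix.one_mul]
      have h2 : (U * Vᴴ)ᴴ * (U * Vᴴ) = 1 := by
        rw [Matrix.conjTranspose_mul, Matrix.conjTranspose_conjTranspose, Matrix.mul_assoc,
          ← Matrix.mul_assoc Uᴴ U Vᴴ, hUU, Matrix.one_mul, hVV']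
      rw [h2, Matrix.one_kronecker_one]
    have hnorm : evnorm (((1 : Matrix (Fin dA) (Fin dA) ℂ) ⊗ₖ (U * Vᴴ)) *ᵥ φ) = 1 := by
      rw [evnorm_mulVec_unitary _ hkron, hφ]
    have hle := abs_dot_le ψ (((1 : Matrix (Fin dA) (Fin dA) ℂ) ⊗ₖ (U * Vᴴ)) *ᵥ φ)
    rw [h0, hψ, hnorm, Complex.norm_real, Real.norm_eq_abs, one_mul] at hle
    calc ∑ i, s i ≤ |∑ i, s i| := le_abs_self _
    _ ≤ 1 := hle
  have hsle1 : ∀ i, s i ≤ 1 := fun i =>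
    le_trans (Finset.single_le_sum (fun j _ => hs j) (Finset.mem_univ i)) hsum1
  -- fidelity equals the sum of singular values
  have hfid : fidelity hρ hσ = ∑ i, s i := by
    set X := hρ.sqrt * hσ.sqrt with hX
    set M := hσ.sqrt * A with hM
    have hXX : Xᴴ * X = M * Mᴴ := by
      rw [hX, hM, Matrix.conjTranspose_mul, Matrix.conjTranspose_mul,
        hρ.posSemidef_sqrt.1.eq, hσ.posSemidef_sqrt.1.eq]
      rw [Matrix.mul_assoc hσ.sqrt hρ.sqrt _, ← Matrix.mul_assoc hρ.sqrt hρ.sqrt _,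
        hρ.sqrt_mul_self, hρA]
      rw [Matrix.mul_assoc A Aᴴ _, ← Matrix.mul_assoc hσ.sqrt A _, Matrix.mul_assoc]
    set N := Aᴴ * B with hNdef
    have hMM2 : Mᴴ * M = N * Nᴴ := by
      rw [hM, hNdef, Matrix.conjTranspose_mul Aᴴ B, Matrix.conjTranspose_mul,
        hσ.posSemidef_sqrt.1.eq, Matrix.conjTranspose_conjTranspose]
      rw [Matrix.mul_assoc Aᴴ, ← Matrix.mul_assoc hσ.sqrt hσ.sqrt A, hσ.sqrt_mul_self, hσB]
      rw [Matrix.mul_assoc B Bᴴ A, ← Matrix.mul_assoc Aᴴ B _]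
    set c := starRingEnd ℂ with hc
    set V' := V.map c with hV'
    have hconjmap : ∀ (X : Matrix (Fin dB) (Fin dB) ℂ), (X.map c)ᴴ = Xᴴ.map c := by
      intro X
      ext i j
      simp [Matrix.conjTranspose_apply, Matrix.map_apply, hc, Complex.star_def]
    have hKHK : Kᴴ * K = V * Matrix.diagonal (fun i => ((s i ^ 2 : ℝ) : ℂ)) * Vᴴ := by
      rw [hKH, hSVD]
      rw [Matrix.mul_assoc (V * _) Uᴴ _, ← Matrix.mul_assoc Uᴴ (U * _) Vᴴ,
        ← Matrix.mul_assoc Uᴴ U _, hUU, Matrix.one_mul,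
        Matrix.mul_assoc V _ _, ← Matrix.mul_assoc (Matrix.diagonal _) (Matrix.diagonal _) Vᴴ,
        Matrix.diagonal_mul_diagonal, ← Matrix.mul_assoc]
      congr 2
      refine congrArg Matrix.diagonal (funext fun i => ?_)
      push_cast
      ring
    have hV'mem : V' ∈ Matrix.unitaryGroup (Fin dB) ℂ := by
      rw [Matrix.mem_unitaryGroup_iff]
      rw [Matrix.star_eq_conjTranspose, hV', hconjmap, ← Matrix.map_mul, hVV']
      exact Matrix.map_one c (map_zero c) (map_one c)
    have hNN : Nᴴ * N = V' * Matrix.diagonal (fun i => ((s i ^ 2 : ℝ) : ℂ)) * V'ᴴ := by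
      have hdm : (Matrix.diagonal (fun i => ((s i ^ 2 : ℝ) : ℂ))).map c
          = Matrix.diagonal (fun i => ((s i ^ 2 : ℝ) : ℂ)) := by
        rw [Matrix.diagonal_map (map_zero c)]
        refine congrArg Matrix.diagonal (funext fun i => ?_)
        simp [hc, Complex.conj_ofReal]
      rw [hN, hconjmap, ← Matrix.map_mul, hKHK, Matrix.map_mul, Matrix.map_mul, hdm,
        ← hconjmap, hV']
    have e1 := trace_sqrt_swap M (Matrix.posSemidef_conjTranspose_mul_self X)
      (Matrix.posSemidef_conjTranspose_mul_self M) hXX rfl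
    have e2 := trace_sqrt_swap N (Matrix.posSemidef_conjTranspose_mul_self M)
      (Matrix.posSemidef_conjTranspose_mul_self N) hMM2 rfl
    have e3 := trace_sqrt_diag hV'mem (fun i => s i ^ 2) (fun i => sq_nonneg _)
      (Matrix.posSemidef_conjTranspose_mul_self N) hNN
    show traceNorm (hρ.sqrt * hσ.sqrt) = ∑ i, s i
    unfold traceNorm
    rw [← hX, e1, e2, e3]
    rw [Complex.ofReal_re]
    exact Finset.sum_congr rfl fun i _ => Real.sqrt_sq (hs i)
  -- rank / cardinality bound
  have hcard : (Finset.univ.filter (fun i => s i ≠ 0)).card ≤ dA := by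
    have hrank1 : (Matrix.diagonal (fun i => (s i : ℂ))).rank
        = (Finset.univ.filter (fun i => s i ≠ 0)).card := by
      rw [Matrix.rank_diagonal, Fintype.card_subtype]
      congr 1
      ext i
      simp [Complex.ofReal_eq_zero]
    have hdiagK : Matrix.diagonal (fun i => (s i : ℂ)) = Uᴴ * K * V := by
      rw [hSVD, ← Matrix.mul_assoc Uᴴ (U * Matrix.diagonal _) Vᴴ,
        ← Matrix.mul_assoc Uᴴ U _, hUU, Matrix.one_mul,
        Matrix.mul_assoc (Matrix.diagonal _) Vᴴ V, hVV, Matrix.mul_one]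
    have hr2 : (Uᴴ * K * V).rank ≤ K.rank :=
      le_trans (Matrix.rank_mul_le_left _ V) (Matrix.rank_mul_le_right Uᴴ K)
    have hr3 : K.rank ≤ dA := by
      rw [hKfact]
      refine le_trans (Matrix.rank_mul_le_left _ _) ?_
      simpa using Matrix.rank_le_card_width Aᵀ
    have h := le_trans hr2 hr3
    rw [← hdiagK, hrank1] at h
    exact h
  -- final arithmetic
  rw [hval, hfid]
  have hsub : ((∑ i, P.eval (s i / α) * s i : ℝ) : ℂ) - ((∑ i, s i : ℝ) : ℂ)
      = ((∑ i, (P.eval (s i / α) * s i - s i) : ℝ) : ℂ) := by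
    push_cast
    simp only [div_eq_mul_inv]
    rw [Finset.sum_sub_distrib]
  rw [hsub, Complex.norm_real, Real.norm_eq_abs]
  have hbnd : ∀ i, |P.eval (s i / α) * s i - s i|
      ≤ κ * s i + (if s i ≠ 0 ∧ s i < α * κ then 3 * (α * κ) else 0) := by
    intro i
    have heq : P.eval (s i / α) * s i - s i = (P.eval (s i / α) - 1) * s i := by ring
    by_cases h0 : s i = 0
    · simp [h0]
    · have hx0 : 0 ≤ s i / α := div_nonneg (hs i) (le_of_lt hα0)
      have hx1 : s i / α ≤ 1 := (div_le_one hα0).mpr (le_trans (hsle1 i) hα)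
      by_cases hbig : α * κ ≤ s i
      · have hxκ : κ ≤ s i / α := (le_div_iff₀ hα0).mpr (by linarith)
        have hxpos : 0 < s i / α := lt_of_lt_of_le hκ0 hxκ
        have hP := happrox (s i / α) (by linarith) hx1 (by rwa [abs_of_nonneg hx0])
        rw [Real.sign_of_pos hxpos] at hP
        rw [heq, abs_mul, abs_of_nonneg (hs i)]
        have hns : ¬ (s i ≠ 0 ∧ s i < α * κ) := by
          push_neg
          intro _
          linarith
        rw [if_neg hns, add_zero]
        exact mul_le_mul_of_nonneg_right hP (hs i)
      · push_neg at hbig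
        have hP2 : |P.eval (s i / α)| ≤ 2 := hbound _ (by linarith) hx1
        rw [heq, abs_mul, abs_of_nonneg (hs i)]
        have h3 : |P.eval (s i / α) - 1| ≤ 3 := by
          have h4 := abs_le.mp hP2
          exact abs_le.mpr ⟨by linarith [h4.1], by linarith [h4.2]⟩
        rw [if_pos ⟨h0, hbig⟩]
        have hterm : |P.eval (s i / α) - 1| * s i ≤ 3 * s i :=
          mul_le_mul_of_nonneg_right h3 (hs i)
        have hκs : 0 ≤ κ * s i := mul_nonneg (le_of_lt hκ0) (hs i)
        nlinarith
  calc |∑ i, (P.eval (s i / α) * s i - s i)|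
      ≤ ∑ i, |P.eval (s i / α) * s i - s i| := Finset.abs_sum_le_sum_abs _ _
    _ ≤ ∑ i, (κ * s i + (if s i ≠ 0 ∧ s i < α * κ then 3 * (α * κ) else 0)) :=
        Finset.sum_le_sum (fun i _ => hbnd i)
    _ = κ * (∑ i, s i) + ∑ i, (if s i ≠ 0 ∧ s i < α * κ then 3 * (α * κ) else 0) := by
        rw [Finset.sum_add_distrib, Finset.mul_sum]
    _ ≤ κ * 1 + (3 * (α * κ)) * dA := by
        have h1 : κ * (∑ i, s i) ≤ κ * 1 := mul_le_mul_of_nonneg_left hsum1 (le_of_lt hκ0)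
        have h2 : ∑ i, (if s i ≠ 0 ∧ s i < α * κ then 3 * (α * κ) else 0)
            ≤ (3 * (α * κ)) * dA := by
          rw [← Finset.sum_filter, Finset.sum_const, nsmul_eq_mul]
          have hc2 : (Finset.univ.filter (fun i => s i ≠ 0 ∧ s i < α * κ)).card ≤ dA := by
            refine le_trans (Finset.card_le_card ?_) hcard
            intro i hi
            simp only [Finset.mem_filter, Finset.mem_univ, true_and] at hi ⊢
            exact hi.1
          calc ((Finset.univ.filter (fun i => s i ≠ 0 ∧ s i < α * κ)).card : ℝ) * (3 * (α * κ))
              ≤ (dA : ℝ) * (3 * (α * κ)) := by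
                refine mul_le_mul_of_nonneg_right ?_ (by positivity)
                exact_mod_cast hc2
            _ = (3 * (α * κ)) * dA := by ring
        linarith
    _ ≤ 4 * dA * α * κ := by
        have hdA1 : (1:ℝ) ≤ dA := by exact_mod_cast hdA
        have h5 : (1:ℝ) ≤ (dA:ℝ) * α := by nlinarith
        have h6 : κ ≤ κ * ((dA:ℝ) * α) := by nlinarith
        nlinarith [h6]
end

section
/- Let R be a d×d complex matrix with a singular value decomposition R = U·Σ·V†, and let f: ℝ → ℝ be an odd function. Let Q be the Hermitian 2d×2d block matrix Q = [[0, R†],[R, 0]] (i.e., Q = |0⟩⟨1|⊗R† + |1⟩⟨0|⊗R). Then f(Q), defined via the spectral decomposition of Q, equals [[0, S†],[S, 0]] where S = U·f(Σ)·V† and f(Σ) is obtained by applying f to each diagonal entry of Σ. -/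
open scoped Matrix Kronecker ComplexOrder

open Polynomial Matrix

open Polynomial Matrix

lemma aeval_diag {n : Type*} [Fintype n] [DecidableEq n] (c : n → ℂ) (p : ℝ[X]) :
    aeval (Matrix.diagonal c) p = Matrix.diagonal (fun i => aeval (c i) p) := by
  induction p using Polynomial.induction_on' with
  | add p q hp hq => simp [hp, hq, diagonal_add]
  | monomial k a =>
      simp [aeval_monomial, algebraMap_eq_diagonal, diagonal_mul_diagonal, diagonal_pow]

lemma aeval_conj {n : Type*} [Fintype n] [DecidableEq n] (W A : Matrix n n ℂ)
    (h1 : W * Wᴴ = 1) (p : ℝ[X]) :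
    aeval (W * A * Wᴴ) p = W * aeval A p * Wᴴ := by
  induction p using Polynomial.induction_on' with
  | add p q hp hq => simp [hp, hq, Matrix.mul_add, Matrix.add_mul]
  | monomial k a =>
      simp only [aeval_monomial]
      have key : (W * A * Wᴴ) ^ k = W * A ^ k * Wᴴ := by
        induction k with
        | zero => simp [h1]
        | succ m ih =>
            rw [pow_succ, ih, pow_succ]
            have : Wᴴ * (W * A * Wᴴ) = A * Wᴴ := by
              have h2 : Wᴴ * W = 1 := mul_eq_one_comm.mp h1
              rw [← Matrix.mul_assoc, ← Matrix.mul_assoc, h2, Matrix.one_mul]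
            rw [Matrix.mul_assoc (W * A ^ m), this, ← Matrix.mul_assoc, ← Matrix.mul_assoc]
      rw [key]
      simp [Algebra.algebraMap_eq_smul_one, Matrix.smul_mul, Matrix.mul_smul]

/-- `matFun` is independent of the chosen unitary diagonalization. -/
lemma matFun_eq_of_diag {n : Type*} [Fintype n] [DecidableEq n] {A : Matrix n n ℂ}
    (hA : A.IsHermitian) (f : ℝ → ℝ) (W : Matrix n n ℂ) (h1 : W * Wᴴ = 1) (μ : n → ℝ)
    (hAW : A = W * Matrix.diagonal (fun i => (μ i : ℂ)) * Wᴴ) :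
    (hA.eigenvectorUnitary : Matrix n n ℂ) *
      Matrix.diagonal (fun i => (f (hA.eigenvalues i) : ℂ)) *
      (star (hA.eigenvectorUnitary : Matrix n n ℂ)) =
    W * Matrix.diagonal (fun i => (f (μ i) : ℂ)) * Wᴴ := by
  classical
  set T : Finset ℝ := (Finset.univ.image hA.eigenvalues) ∪ (Finset.univ.image μ) with hT
  set p : ℝ[X] := Lagrange.interpolate T id f with hp
  have hinj : Set.InjOn (id : ℝ → ℝ) T := fun a _ b _ h => h
  have hpeval : ∀ x ∈ T, p.eval x = f x := by
    intro x hx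
    rw [hp]; exact Lagrange.eval_interpolate_at_node f hinj hx
  have hpc : ∀ x ∈ T, aeval (x : ℂ) p = (f x : ℂ) := by
    intro x hx
    have : (x : ℂ) = algebraMap ℝ ℂ x := rfl
    rw [this, aeval_algebraMap_apply, ← hpeval x hx]
    rw [Polynomial.coe_aeval_eq_eval]; rfl
  have hU1 : (hA.eigenvectorUnitary : Matrix n n ℂ) *
      (hA.eigenvectorUnitary : Matrix n n ℂ)ᴴ = 1 := by
    simpa [star_eq_conjTranspose] using
      (Matrix.mem_unitaryGroup_iff.mp hA.eigenvectorUnitary.2)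
  have hspec := hA.spectral_theorem
  have e1 : aeval A p = (hA.eigenvectorUnitary : Matrix n n ℂ) *
      Matrix.diagonal (fun i => (f (hA.eigenvalues i) : ℂ)) *
      (star (hA.eigenvectorUnitary : Matrix n n ℂ)) := by
    conv_lhs => rw [hspec]
    rw [Unitary.conjStarAlgAut_apply]
    rw [show (star (hA.eigenvectorUnitary : Matrix n n ℂ))
        = (hA.eigenvectorUnitary : Matrix n n ℂ)ᴴ from rfl]
    rw [aeval_conj _ _ hU1, aeval_diag]
    have hfun : (fun i => aeval ((RCLike.ofReal ∘ hA.eigenvalues) i : ℂ) p)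
        = fun i => (f (hA.eigenvalues i) : ℂ) := by
      funext i
      exact hpc _ (Finset.mem_union_left _ (Finset.mem_image_of_mem _ (Finset.mem_univ i)))
    rw [hfun]
  have e2 : aeval A p = W * Matrix.diagonal (fun i => (f (μ i) : ℂ)) * Wᴴ := by
    conv_lhs => rw [hAW]
    rw [aeval_conj _ _ h1, aeval_diag]
    have hfun : (fun i => aeval ((μ i : ℝ) : ℂ) p) = fun i => (f (μ i) : ℂ) := by
      funext i
      exact hpc _ (Finset.mem_union_right _ (Finset.mem_image_of_mem _ (Finset.mem_univ i)))
    rw [hfun]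
  rw [← e1, ← e2]


lemma sqrt2_mul_self : ((((Real.sqrt 2)⁻¹ : ℝ) : ℂ)) * ((((Real.sqrt 2)⁻¹ : ℝ) : ℂ)) = 2⁻¹ := by
  rw [← Complex.ofReal_mul, ← mul_inv, Real.mul_self_sqrt (by norm_num : (0:ℝ) ≤ 2)]
  norm_num

lemma sqrt2_star : star ((((Real.sqrt 2)⁻¹ : ℝ) : ℂ)) = ((((Real.sqrt 2)⁻¹ : ℝ) : ℂ)) :=
  Complex.conj_ofReal _

lemma herm_diag_conj {d : ℕ} (U V : Matrix (Fin d) (Fin d) ℂ) (t : Fin d → ℝ) :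
    (((Real.sqrt 2)⁻¹ : ℝ) : ℂ) • Matrix.fromBlocks V V U (-U) *
      Matrix.diagonal (fun i => ((Sum.elim t (fun j => -(t j)) i : ℝ) : ℂ)) *
      ((((Real.sqrt 2)⁻¹ : ℝ) : ℂ) • Matrix.fromBlocks V V U (-U))ᴴ =
    Matrix.fromBlocks 0 (V * Matrix.diagonal (fun i => (t i : ℂ)) * Uᴴ)
      (U * Matrix.diagonal (fun i => (t i : ℂ)) * Vᴴ) 0 := by
  have hdiag : Matrix.diagonal (fun i => ((Sum.elim t (fun j => -(t j)) i : ℝ) : ℂ))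
      = Matrix.fromBlocks (Matrix.diagonal (fun i => (t i : ℂ))) 0 0
          (-(Matrix.diagonal (fun i => (t i : ℂ)))) := by
    have he : (fun i => ((Sum.elim t (fun j => -(t j)) i : ℝ) : ℂ))
        = Sum.elim (fun i => (t i : ℂ)) (fun i => -((t i : ℂ))) := by
      funext i; cases i <;> simp
    rw [he, ← Matrix.fromBlocks_diagonal, Matrix.diagonal_neg]
  have hcc : ((((Real.sqrt 2)⁻¹ : ℝ) : ℂ)) * ((((Real.sqrt 2)⁻¹ : ℝ) : ℂ)) = 2⁻¹ := by
    rw [← Complex.ofReal_mul, ← mul_inv, Real.mul_self_sqrt (by norm_num : (0:ℝ) ≤ 2)]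
    norm_num
  set c : ℂ := (((Real.sqrt 2)⁻¹ : ℝ) : ℂ) with hc
  have hstar : star c = c := by rw [hc]; exact Complex.conj_ofReal _
  rw [hdiag, Matrix.conjTranspose_smul, hstar, Matrix.smul_mul, Matrix.smul_mul,
    Matrix.mul_smul, smul_smul, hcc]
  rw [Matrix.fromBlocks_conjTranspose, Matrix.fromBlocks_multiply, Matrix.fromBlocks_multiply]
  simp only [Matrix.mul_zero, Matrix.zero_mul, add_zero, zero_add, Matrix.mul_neg,
    Matrix.neg_mul, Matrix.conjTranspose_neg, neg_neg,
    add_neg_cancel, neg_add_cancel, smul_zero]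
  have key : ∀ X : Matrix (Fin d) (Fin d) ℂ, (2⁻¹ : ℂ) • (X + X) = X := fun X => by
    rw [← two_smul ℂ, smul_smul]; norm_num
  rw [Matrix.fromBlocks_smul, smul_zero, key, key]


lemma W_mul_conjT {d : ℕ} (U V : Matrix (Fin d) (Fin d) ℂ)
    (hUU : U * Uᴴ = 1) (hVV : V * Vᴴ = 1) :
    ((((Real.sqrt 2)⁻¹ : ℝ) : ℂ) • Matrix.fromBlocks V V U (-U)) *
      ((((Real.sqrt 2)⁻¹ : ℝ) : ℂ) • Matrix.fromBlocks V V U (-U))ᴴ = 1 := by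
  rw [Matrix.conjTranspose_smul, sqrt2_star, Matrix.smul_mul, Matrix.mul_smul, smul_smul,
    sqrt2_mul_self, Matrix.fromBlocks_conjTranspose, Matrix.fromBlocks_multiply]
  simp only [Matrix.conjTranspose_neg, Matrix.mul_neg, Matrix.neg_mul, neg_neg,
    add_neg_cancel, neg_add_cancel, hUU, hVV]
  have key : (2⁻¹ : ℂ) • ((1 : Matrix (Fin d) (Fin d) ℂ) + 1) = 1 := by
    rw [← two_smul ℂ, smul_smul]; norm_num
  rw [Matrix.fromBlocks_smul, smul_zero, key, ← Matrix.fromBlocks_one]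

lemma conjT_UdV {d : ℕ} (U V : Matrix (Fin d) (Fin d) ℂ) (t : Fin d → ℝ) :
    (U * Matrix.diagonal (fun i => (t i : ℂ)) * Vᴴ)ᴴ
      = V * Matrix.diagonal (fun i => (t i : ℂ)) * Uᴴ := by
  rw [Matrix.conjTranspose_mul, Matrix.conjTranspose_mul, Matrix.conjTranspose_conjTranspose,
    Matrix.diagonal_conjTranspose, Matrix.mul_assoc]
  have hst : star (fun i => ((t i : ℝ) : ℂ)) = fun i => ((t i : ℝ) : ℂ) := by
    funext i
    exact Complex.conj_ofReal _
  rw [hst]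

/-- Odd functions applied to the Hermitian dilation of a matrix: for `R = U Σ V†` and
`Q = [[0, R†],[R, 0]]`, and `f` odd, `f(Q) = [[0, S†],[S, 0]]` with `S = U f(Σ) V†`. -/
theorem odd_function_hermitian_dilation (d : ℕ)
    (R U V : Matrix (Fin d) (Fin d) ℂ)
    (hU : U ∈ Matrix.unitaryGroup (Fin d) ℂ) (hV : V ∈ Matrix.unitaryGroup (Fin d) ℂ)
    (s : Fin d → ℝ) (hs : ∀ i, 0 ≤ s i)
    (hSVD : R = U * Matrix.diagonal (fun i => (s i : ℂ)) * Vᴴ)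
    (f : ℝ → ℝ) (hf : ∀ x : ℝ, f (-x) = -f x)
    (Q : Matrix (Fin d ⊕ Fin d) (Fin d ⊕ Fin d) ℂ)
    (hQ : Q = Matrix.fromBlocks 0 Rᴴ R 0)
    (hQherm : Q.IsHermitian) :
    matFun hQherm f =
      Matrix.fromBlocks 0 (U * Matrix.diagonal (fun i => (f (s i) : ℂ)) * Vᴴ)ᴴ
        (U * Matrix.diagonal (fun i => (f (s i) : ℂ)) * Vᴴ) 0 := by
  classical
  have hUU : U * Uᴴ = 1 := by
    simpa [star_eq_conjTranspose] using Matrix.mem_unitaryGroup_iff.mp hU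
  have hVV : V * Vᴴ = 1 := by
    simpa [star_eq_conjTranspose] using Matrix.mem_unitaryGroup_iff.mp hV
  set W : Matrix (Fin d ⊕ Fin d) (Fin d ⊕ Fin d) ℂ :=
    (((Real.sqrt 2)⁻¹ : ℝ) : ℂ) • Matrix.fromBlocks V V U (-U) with hWdef
  have hW1 : W * Wᴴ = 1 := W_mul_conjT U V hUU hVV
  have hQW : Q = W * Matrix.diagonal
      (fun i => ((Sum.elim s (fun j => -(s j)) i : ℝ) : ℂ)) * Wᴴ := by
    rw [hWdef, herm_diag_conj, hQ, hSVD, ← conjT_UdV U V s]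
  unfold matFun
  rw [matFun_eq_of_diag hQherm f W hW1 _ hQW]
  have hfμ : (fun i => ((f (Sum.elim s (fun j => -(s j)) i) : ℝ) : ℂ))
      = fun i => ((Sum.elim (fun j => f (s j)) (fun j => -(f (s j))) i : ℝ) : ℂ) := by
    funext i; cases i <;> simp [hf]
  rw [hfμ, hWdef, herm_diag_conj, conjT_UdV U V (fun j => f (s j))]
end
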